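/- If X is a path-connected topological space and there exists a continuous section s : X × X → P(X) of the endpoint fibration p (i.e., p ∘ s = id on all of X × X), then X is contractible. Conversely, if X is contractible, such a global continuous section exists; hence TC(X) = 1 if and only if X is contractible. -/

import Mathlib

open unitInterval

/-- The endpoint map `p : P(X) → X × X`, `p(σ) = (σ(0), σ(1))`, on the space of paths
`C([0,1], X)` with the compact-open topology. -/
def pathEndpoints (X : Type*) [TopologicalSpace X] : C(unitInterval, X) → X × X :=
  fun γ => (γ 0, γ 1)

/-- `TCle X k` : `X × X` admits a cover by `k` open sets, each with a continuous section of the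
endpoint map. -/
def TCle (X : Type*) [TopologicalSpace X] (k : ℕ) : Prop :=
  ∃ (U : Fin k → Set (X × X)) (s : Fin k → (X × X) → C(unitInterval, X)),
    (∀ i, IsOpen (U i)) ∧ (⋃ i, U i) = Set.univ ∧
    ∀ i, ContinuousOn (s i) (U i) ∧ ∀ p ∈ U i, pathEndpoints X (s i p) = p

/-- Farber's topological complexity, valued in `ℕ∞` (so `topComplexity X = ⊤`, i.e. `∞`, if no
finite cover works). -/
noncomputable def topComplexity (X : Type*) [TopologicalSpace X] : ℕ∞ :=
  sInf {n : ℕ∞ | ∃ k : ℕ, n = k ∧ TCle X k}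


/-- A global continuous section gives contractibility. -/
lemma aux_sec_contr (X : Type*) [TopologicalSpace X] [Nonempty X]
    (s : C(X × X, C(unitInterval, X))) (hs : ∀ p : X × X, pathEndpoints X (s p) = p) :
    ContractibleSpace X := by
  obtain ⟨x₀⟩ := ‹Nonempty X›
  rw [contractible_iff_id_nullhomotopic]
  refine ⟨x₀, ⟨⟨⟨fun p => s (p.2, x₀) p.1, ?_⟩, ?_, ?_⟩⟩⟩
  · exact ContinuousEval.continuous_eval.comp
      ((s.continuous.comp (by continuity)).prodMk continuous_fst)
  · intro x
    exact congrArg Prod.fst (hs (x, x₀))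
  · intro x
    exact congrArg Prod.snd (hs (x, x₀))

/-- Contractibility gives a global continuous section. -/
lemma aux_contr_sec (X : Type*) [TopologicalSpace X] (hX : ContractibleSpace X) :
    ∃ s : C(X × X, C(unitInterval, X)), ∀ p : X × X, pathEndpoints X (s p) = p := by
  obtain ⟨x₀, ⟨h⟩⟩ := (contractible_iff_id_nullhomotopic X).mp hX
  set π : ℝ → unitInterval := Set.projIcc 0 1 zero_le_one with hπ
  have hg : Continuous fun z : (X × X) × ℝ =>
      if z.2 ≤ 1/2 then h (π (2*z.2), z.1.1) else h (π (2 - 2*z.2), z.1.2) := by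
    apply Continuous.if_le
    · exact h.continuous.comp ((continuous_projIcc.comp (by continuity)).prodMk
        (continuous_fst.comp continuous_fst))
    · exact h.continuous.comp ((continuous_projIcc.comp (by continuity)).prodMk
        (continuous_snd.comp continuous_fst))
    · exact continuous_snd
    · exact continuous_const
    · rintro ⟨⟨a, b⟩, r⟩ hr
      have hr' : r = 1/2 := hr
      subst hr'
      have h1 : π (1:ℝ) = 1 := Set.projIcc_right zero_le_one
      norm_num
      rw [h1, h.apply_one, h.apply_one]
      rfl
  let F : C((X × X) × unitInterval, X) :=
    ⟨fun z => if (z.2 : ℝ) ≤ 1/2 then h (π (2*(z.2:ℝ)), z.1.1) else h (π (2 - 2*(z.2:ℝ)), z.1.2),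
     hg.comp ((continuous_fst).prodMk (continuous_subtype_val.comp continuous_snd))⟩
  refine ⟨F.curry, ?_⟩
  rintro ⟨a, b⟩
  have e0 : F.curry (a, b) 0 = a := by
    simp only [ContinuousMap.curry_apply, F, ContinuousMap.coe_mk]
    norm_num
    have : π (0:ℝ) = 0 := Set.projIcc_left zero_le_one
    rw [this, h.apply_zero]; rfl
  have e1 : F.curry (a, b) 1 = b := by
    simp only [ContinuousMap.curry_apply, F, ContinuousMap.coe_mk]
    norm_num
    have h0 : π (0:ℝ) = 0 := Set.projIcc_left zero_le_one
    rw [h0, h.apply_zero]; rfl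
  exact Prod.ext e0 e1

/-- For a path-connected space `X`, a global continuous section of the endpoint fibration exists
iff `X` is contractible; consequently `TC(X) = 1` iff `X` is contractible. -/
theorem stmt_1 (X : Type*) [TopologicalSpace X] [PathConnectedSpace X] :
    ((∃ s : C(X × X, C(unitInterval, X)), ∀ p : X × X, pathEndpoints X (s p) = p) ↔
      ContractibleSpace X) ∧
    (topComplexity X = 1 ↔ ContractibleSpace X) := by
  have hne : Nonempty X := PathConnectedSpace.nonempty
  have main : (∃ s : C(X × X, C(unitInterval, X)), ∀ p : X × X, pathEndpoints X (s p) = p) ↔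
      ContractibleSpace X := by
    constructor
    · rintro ⟨s, hs⟩
      exact aux_sec_contr X s hs
    · exact aux_contr_sec X
  refine ⟨main, ?_⟩
  constructor
  · intro hTC
    rw [← main]
    -- extract membership from sInf = 1
    have hlt : sInf {n : ℕ∞ | ∃ k : ℕ, n = k ∧ TCle X k} < 2 := by
      rw [show sInf {n : ℕ∞ | ∃ k : ℕ, n = k ∧ TCle X k} = topComplexity X from rfl, hTC]
      norm_num
    obtain ⟨n, ⟨k, rfl, hk⟩, hn2⟩ := sInf_lt_iff.mp hlt
    have hk0 : k ≠ 0 := by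
      rintro rfl
      obtain ⟨U, s, _, hcov, _⟩ := hk
      obtain ⟨x⟩ := hne
      have : (x, x) ∈ ⋃ i : Fin 0, U i := hcov ▸ Set.mem_univ _
      simp at this
    have hk1 : k = 1 := by
      have : (k : ℕ∞) < 2 := hn2
      have : k < 2 := by exact_mod_cast this
      omega
    subst hk1
    obtain ⟨U, s, _, hcov, hsec⟩ := hk
    have hU0 : U 0 = Set.univ := by
      apply Set.eq_univ_of_forall
      intro p
      have : p ∈ ⋃ i, U i := hcov ▸ Set.mem_univ p
      obtain ⟨_, ⟨i, rfl⟩, hp⟩ := this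
      rwa [Fin.eq_zero i] at hp
    have hc : Continuous (s 0) := by
      rw [← continuousOn_univ]
      exact hU0 ▸ (hsec 0).1
    exact ⟨⟨s 0, hc⟩, fun p => (hsec 0).2 p (hU0 ▸ Set.mem_univ p)⟩
  · intro hX
    obtain ⟨sec, hsec⟩ := main.mpr hX
    have h1mem : (1 : ℕ∞) ∈ {n : ℕ∞ | ∃ k : ℕ, n = k ∧ TCle X k} := by
      refine ⟨1, by norm_num, ?_⟩
      refine ⟨fun _ => Set.univ, fun _ => sec, fun _ => isOpen_univ, by rw [Set.iUnion_const], ?_⟩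
      intro i
      exact ⟨sec.continuous.continuousOn, fun p _ => hsec p⟩
    refine le_antisymm (sInf_le h1mem) (le_sInf ?_)
    rintro n ⟨k, rfl, hk⟩
    have hk0 : k ≠ 0 := by
      rintro rfl
      obtain ⟨U, s, _, hcov, _⟩ := hk
      obtain ⟨x⟩ := hne
      have : (x, x) ∈ ⋃ i : Fin 0, U i := hcov ▸ Set.mem_univ _
      simp at this
    exact_mod_cast Nat.one_le_iff_ne_zero.mpr hk0
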